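/- Let X ⊆ R^n, U ⊆ R^m be convex, z : R^n → R ∪ {−∞} concave, w ∈ C²(R^n, R), ℓ ∈ C²(X×U, R), and f(x,u) = Fx + Gu + g affine. Suppose there exist α, β, C > 0 with −C I_n ≤ D²w ≤ −β I_n, D²_u ℓ ≤ −α I_m, ‖D²_x ℓ‖ ≤ C, ‖D²_{xu} ℓ‖ ≤ C. Then there exists δ₀ > 0, depending only on α, β, C, ‖F‖, ‖G‖, such that for all 0 < δ ≤ δ₀ the function (x,u) ↦ z(x) + w(x + δ f(x,u)) + δ ℓ(x,u) is concave on X × U. -/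

import Mathlib

open scoped RealInnerProductSpace

section Aux

variable {E : Type*} [NormedAddCommGroup E] [NormedSpace ℝ E]

private lemma line_hasDerivAt {φ : E → ℝ} (hφ : ContDiff ℝ 2 φ) (p v : E) (t : ℝ) :
    HasDerivAt (fun s : ℝ => φ (p + s • v)) (fderiv ℝ φ (p + t • v) v) t := by
  have hγ : HasDerivAt (fun s : ℝ => p + s • v) v t := by
    simpa using ((hasDerivAt_id t).smul_const v).const_add p
  exact ((hφ.differentiable (by norm_num)).differentiableAt.hasFDerivAt).comp_hasDerivAt t hγ

private lemma line_hasDerivAt2 {φ : E → ℝ} (hφ : ContDiff ℝ 2 φ) (p v : E) (t : ℝ) :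
    HasDerivAt (fun s : ℝ => fderiv ℝ φ (p + s • v) v)
      (iteratedFDeriv ℝ 2 φ (p + t • v) ![v, v]) t := by
  have hγ : HasDerivAt (fun s : ℝ => p + s • v) v t := by
    simpa using ((hasDerivAt_id t).smul_const v).const_add p
  have hΦ : HasFDerivAt (fderiv ℝ φ) (fderiv ℝ (fderiv ℝ φ) (p + t • v)) (p + t • v) :=
    (((hφ.fderiv_right (m := 1) (by norm_num)).differentiable (by norm_num)) (p + t • v)).hasFDerivAt
  have heval := ((ContinuousLinearMap.apply ℝ ℝ v).hasFDerivAt.comp (p + t • v) hΦ)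
  have h := heval.comp_hasDerivAt t hγ
  have heq : iteratedFDeriv ℝ 2 φ (p + t • v) ![v, v]
      = fderiv ℝ (fderiv ℝ φ) (p + t • v) v v := by
    rw [iteratedFDeriv_two_apply]; simp
  rw [heq]
  exact h

private lemma update0 {x z u : E} : Function.update (![x, z] : Fin 2 → E) 0 u = ![u, z] := by
  funext i; fin_cases i <;> simp

private lemma update1 {x z u : E} : Function.update (![x, z] : Fin 2 → E) 1 u = ![x, u] := by
  funext i; fin_cases i <;> simp

private lemma map_pair_add_left (T : ContinuousMultilinearMap ℝ (fun _ : Fin 2 => E) ℝ)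
    (x y z : E) : T ![x + y, z] = T ![x, z] + T ![y, z] := by
  have := T.map_update_add ![x, z] 0 x y
  simpa [update0] using this

private lemma map_pair_add_right (T : ContinuousMultilinearMap ℝ (fun _ : Fin 2 => E) ℝ)
    (x y z : E) : T ![x, y + z] = T ![x, y] + T ![x, z] := by
  have := T.map_update_add ![x, y] 1 y z
  simpa [update1] using this

/-- Concavity from nonpositive second derivative along chords. -/
private lemma concaveOn_of_line (s : Set E) (hs : Convex ℝ s) {φ : E → ℝ}
    (hφ : ContDiff ℝ 2 φ)
    (h2 : ∀ p ∈ s, ∀ q ∈ s, ∀ t ∈ Set.Icc (0:ℝ) 1,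
      deriv (deriv (fun r : ℝ => φ (p + r • (q - p)))) t ≤ 0) :
    ConcaveOn ℝ s φ := by
  refine ⟨hs, fun p hp q hq a b ha hb hab => ?_⟩
  set ψ : ℝ → ℝ := fun r => φ (p + r • (q - p)) with hψdef
  have hψ : ContDiff ℝ 2 ψ :=
    hφ.comp (contDiff_const.add (contDiff_id.smul contDiff_const))
  have hψ1 : ContDiff ℝ 1 (deriv ψ) := by
    have := ContDiff.iterate_deriv' 1 1 (f := ψ) (by exact_mod_cast hψ)
    simpa using this
  have hconc : ConcaveOn ℝ (Set.Icc (0:ℝ) 1) ψ := by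
    apply concaveOn_of_deriv2_nonpos (convex_Icc 0 1) hψ.continuous.continuousOn
      ((hψ.differentiable (by norm_num)).differentiableOn)
      ((hψ1.differentiable (by norm_num)).differentiableOn)
    intro x hx
    rw [interior_Icc] at hx
    have := h2 p hp q hq x ⟨hx.1.le, hx.2.le⟩
    simpa [Function.iterate_succ, Function.comp] using this
  have h01 : a • (0:ℝ) + b • 1 = b := by simp
  have hcomb := hconc.2 (Set.left_mem_Icc.2 zero_le_one) (Set.right_mem_Icc.2 zero_le_one)
    ha hb hab
  rw [h01] at hcomb
  have e0 : ψ 0 = φ p := by simp [hψdef]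
  have e1 : ψ 1 = φ q := by simp [hψdef]
  have eb : ψ b = φ (a • p + b • q) := by
    have hab' : a = 1 - b := by linarith
    subst hab'
    simp only [hψdef]
    congr 1
    module
  rw [e0, e1, eb] at hcomb
  simpa [smul_eq_mul] using hcomb

end Aux

private lemma key_ineq (α β C K1 K2 s t δ : ℝ) (hα : 0 < α) (hβ : 0 < β) (hC : 0 < C)
    (hK1 : 0 ≤ K1) (hK2 : 0 ≤ K2) (hs : 0 ≤ s) (ht : 0 ≤ t) (hδ : 0 < δ)
    (hD : δ * ((2*β*K1 + C)*α + (2*β*K2 + 2*C)^2) ≤ α*β) :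
    -β*s^2 + 2*δ*β*s*(K1*s + K2*t) + δ*(C*s^2 + 2*C*s*t - α*t^2) ≤ 0 := by
  have h1 : 0 ≤ δ * ((2*β*K2+2*C)*s - α*t)^2 := by positivity
  have h2 : δ * ((2*β*K1 + C)*α + (2*β*K2 + 2*C)^2) * s^2 ≤ α*β*s^2 :=
    mul_le_mul_of_nonneg_right hD (sq_nonneg s)
  have h3 : 0 ≤ δ*(2*β*K2+2*C)^2*s^2 := by positivity
  have h4 : 0 ≤ δ*α^2*t^2 := by positivity
  have h : 2*α*(-β*s^2 + 2*δ*β*s*(K1*s + K2*t) + δ*(C*s^2 + 2*C*s*t - α*t^2)) ≤ 0 := by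
    nlinarith [h1, h2, h3, h4]
  by_contra hcon
  push_neg at hcon
  nlinarith [mul_pos (mul_pos two_pos hα) hcon, h]

private lemma ereal_distrib (a r : ℝ) (ha : 0 ≤ a) (x : EReal) :
    (a : EReal) * (x + (r : EReal)) = (a : EReal) * x + ((a * r : ℝ) : EReal) := by
  induction x using EReal.rec with
  | bot =>
    rcases eq_or_lt_of_le ha with h | h
    · simp [← h]
    · rw [EReal.bot_add, EReal.mul_bot_of_pos (by exact_mod_cast h), EReal.bot_add]
  | coe y => norm_cast; ring
  | top =>
    rcases eq_or_lt_of_le ha with h | h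
    · simp [← h]
    · rw [EReal.top_add_coe, EReal.mul_top_of_pos (by exact_mod_cast h), EReal.top_add_coe]

set_option maxHeartbeats 1600000 in
/-- Concavity of the local problems.  Let `X ⊆ ℝ^n`, `U ⊆ ℝ^m` be convex,
`z : ℝ^n → ℝ ∪ {−∞}` concave, `w ∈ C²(ℝ^n, ℝ)`, `ℓ ∈ C²` on `X × U`, and
`f(x,u) = F x + G u + g` affine.  Assume `−C Iₙ ≤ D²w ≤ −β Iₙ`,
`D²_u ℓ ≤ −α I_m`, `‖D²_x ℓ‖ ≤ C`, `‖D²_{xu} ℓ‖ ≤ C` with `α, β, C > 0`.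
Then there exists `δ₀ > 0` such that for all `0 < δ ≤ δ₀` the function
`(x,u) ↦ z(x) + w(x + δ f(x,u)) + δ ℓ(x,u)` is concave on `X × U`
(concavity for `ℝ ∪ {−∞}`-valued functions being expressed in `EReal`). -/
theorem concavity_of_local_problem (n m : ℕ)
    (X : Set (EuclideanSpace ℝ (Fin n))) (U : Set (EuclideanSpace ℝ (Fin m)))
    (hX : Convex ℝ X) (hU : Convex ℝ U)
    (z : EuclideanSpace ℝ (Fin n) → EReal)
    (hz : ∀ x y, ∀ a b : ℝ, 0 ≤ a → 0 ≤ b → a + b = 1 →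
      (a : EReal) * z x + (b : EReal) * z y ≤ z (a • x + b • y))
    (w : EuclideanSpace ℝ (Fin n) → ℝ) (hw : ContDiff ℝ 2 w)
    (ℓ : EuclideanSpace ℝ (Fin n) × EuclideanSpace ℝ (Fin m) → ℝ)
    (hℓ : ContDiff ℝ 2 ℓ)
    (F : EuclideanSpace ℝ (Fin n) →L[ℝ] EuclideanSpace ℝ (Fin n))
    (G : EuclideanSpace ℝ (Fin m) →L[ℝ] EuclideanSpace ℝ (Fin n))
    (g : EuclideanSpace ℝ (Fin n))
    (α β C : ℝ) (hα : 0 < α) (hβ : 0 < β) (hC : 0 < C)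
    (hwlow : ∀ x v, -C * ‖v‖ ^ 2 ≤ iteratedFDeriv ℝ 2 w x ![v, v])
    (hwup : ∀ x v, iteratedFDeriv ℝ 2 w x ![v, v] ≤ -β * ‖v‖ ^ 2)
    (hℓuu : ∀ p ∈ X ×ˢ U, ∀ hu,
      iteratedFDeriv ℝ 2 ℓ p ![(0, hu), (0, hu)] ≤ -α * ‖hu‖ ^ 2)
    (hℓxx : ∀ p ∈ X ×ˢ U, ∀ hx hy,
      |iteratedFDeriv ℝ 2 ℓ p ![(hx, 0), (hy, 0)]| ≤ C * ‖hx‖ * ‖hy‖)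
    (hℓxu : ∀ p ∈ X ×ˢ U, ∀ hx hu,
      |iteratedFDeriv ℝ 2 ℓ p ![(hx, 0), (0, hu)]| ≤ C * ‖hx‖ * ‖hu‖) :
    ∃ δ₀ > 0, ∀ δ : ℝ, 0 < δ → δ ≤ δ₀ →
      ∀ p ∈ X ×ˢ U, ∀ q ∈ X ×ˢ U, ∀ a b : ℝ, 0 ≤ a → 0 ≤ b → a + b = 1 →
        (a : EReal) *
            (z p.1 + ((w (p.1 + δ • (F p.1 + G p.2 + g)) + δ * ℓ p : ℝ) : EReal)) +
          (b : EReal) *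
            (z q.1 + ((w (q.1 + δ • (F q.1 + G q.2 + g)) + δ * ℓ q : ℝ) : EReal)) ≤
        z (a • p.1 + b • q.1) +
          ((w ((a • p + b • q).1 + δ • (F (a • p + b • q).1 + G (a • p + b • q).2 + g)) +
              δ * ℓ (a • p + b • q) : ℝ) : EReal) := by
  have hden : 0 < (2*β*‖F‖ + C)*α + (2*β*‖G‖ + 2*C)^2 := by
    have h1 : 0 < 2*β*‖F‖ + C := by nlinarith [norm_nonneg F]
    nlinarith [sq_nonneg (2*β*‖G‖+2*C), mul_pos h1 hα]
  refine ⟨α*β / ((2*β*‖F‖ + C)*α + (2*β*‖G‖ + 2*C)^2), div_pos (mul_pos hα hβ) hden, ?_⟩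
  intro δ hδ hδ₀ p hp q hq a b ha hb hab
  have hδD : δ * ((2*β*‖F‖ + C)*α + (2*β*‖G‖ + 2*C)^2) ≤ α*β :=
    (le_div_iff₀ hden).mp hδ₀
  set φ : (EuclideanSpace ℝ (Fin n) × EuclideanSpace ℝ (Fin m)) → ℝ :=
    fun r => w (r.1 + δ • (F r.1 + G r.2 + g)) + δ * ℓ r with hφdef
  have hφC2 : ContDiff ℝ 2 φ := by
    apply ContDiff.add _ (contDiff_const.mul hℓ)
    exact hw.comp (contDiff_fst.add
      ((((F.contDiff.comp contDiff_fst).add (G.contDiff.comp contDiff_snd)).add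
        contDiff_const).const_smul δ))
  have hconc : ConcaveOn ℝ (X ×ˢ U) φ := by
    apply concaveOn_of_line _ (hX.prod hU) hφC2
    intro x hx y hy t htI
    set v := y - x with hvdef
    set u : EuclideanSpace ℝ (Fin n) := v.1 + δ • (F v.1 + G v.2) with hu
    set c : EuclideanSpace ℝ (Fin n) := x.1 + δ • (F x.1 + G x.2 + g) with hc
    have hline : (fun r : ℝ => φ (x + r • v)) =
        fun r : ℝ => w (c + r • u) + δ * ℓ (x + r • v) := by
      funext r
      simp only [hφdef]
      congr 2
      simp only [Prod.fst_add, Prod.smul_fst, Prod.snd_add, Prod.smul_snd, map_add, map_smul,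
        hu, hc]
      module
    have hd1 : deriv (fun r : ℝ => φ (x + r • v)) =
        fun r => fderiv ℝ w (c + r • u) u + δ * fderiv ℝ ℓ (x + r • v) v := by
      rw [hline]; funext r
      exact ((line_hasDerivAt hw c u r).add ((line_hasDerivAt hℓ x v r).const_mul δ)).deriv
    have hd2 : deriv (deriv (fun r : ℝ => φ (x + r • v))) t
        = iteratedFDeriv ℝ 2 w (c + t • u) ![u, u]
          + δ * iteratedFDeriv ℝ 2 ℓ (x + t • v) ![v, v] := by
      rw [hd1]
      exact ((line_hasDerivAt2 hw c u t).add ((line_hasDerivAt2 hℓ x v t).const_mul δ)).deriv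
    rw [hd2]
    have hmem : x + t • v ∈ X ×ˢ U := by
      have := (hX.prod hU) hx hy (by linarith [htI.2] : (0:ℝ) ≤ 1 - t) htI.1 (by ring)
      convert this using 1
      module
    have hk : ‖F v.1 + G v.2‖ ≤ ‖F‖*‖v.1‖ + ‖G‖*‖v.2‖ :=
      (norm_add_le _ _).trans (add_le_add (F.le_opNorm _) (G.le_opNorm _))
    have hu2 : ‖v.1‖^2 - 2*δ*‖v.1‖*‖F v.1 + G v.2‖ ≤ ‖u‖^2 := by
      have expand := norm_add_sq_real v.1 (δ • (F v.1 + G v.2))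
      rw [real_inner_smul_right] at expand
      have hinner : -(‖v.1‖ * ‖F v.1 + G v.2‖) ≤ (inner ℝ v.1 (F v.1 + G v.2) : ℝ) :=
        (abs_le.mp (abs_real_inner_le_norm _ _)).1
      have hmul := mul_le_mul_of_nonneg_left hinner hδ.le
      rw [hu]
      linarith [sq_nonneg ‖δ • (F v.1 + G v.2)‖, expand, hmul]
    -- split the Hessian of ℓ
    set T := iteratedFDeriv ℝ 2 ℓ (x + t • v) with hT
    have hsym : T ![((0:EuclideanSpace ℝ (Fin n)), v.2), (v.1, (0:EuclideanSpace ℝ (Fin m)))]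
        = T ![(v.1, 0), (0, v.2)] := by
      have hs2 := (hℓ.contDiffAt (x := x + t • v)).isSymmSndFDerivAt (by simp)
      rw [hT, iteratedFDeriv_two_apply, iteratedFDeriv_two_apply]
      simpa using hs2 _ _
    have hvsplit : (![v, v] : Fin 2 → _) =
        ![((v.1, 0) : EuclideanSpace ℝ (Fin n) × EuclideanSpace ℝ (Fin m)) + (0, v.2),
          (v.1, 0) + (0, v.2)] := by
      have : v = ((v.1, 0) : EuclideanSpace ℝ (Fin n) × EuclideanSpace ℝ (Fin m)) + (0, v.2) := by
        ext <;> simp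
      rw [← this]
    have hTsplit : T ![v, v] ≤ C*‖v.1‖^2 + 2*(C*‖v.1‖*‖v.2‖) - α*‖v.2‖^2 := by
      rw [hvsplit, map_pair_add_left, map_pair_add_right, map_pair_add_right, hsym]
      have h1 : T ![(v.1, 0), (v.1, 0)] ≤ C * ‖v.1‖ * ‖v.1‖ := le_of_abs_le (hℓxx _ hmem v.1 v.1)
      have h2 : T ![(v.1, 0), (0, v.2)] ≤ C * ‖v.1‖ * ‖v.2‖ := le_of_abs_le (hℓxu _ hmem v.1 v.2)
      have h3 : T ![(0, v.2), (0, v.2)] ≤ -α * ‖v.2‖^2 := hℓuu _ hmem v.2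
      linarith [h1, h2, h3]
    have A1 : iteratedFDeriv ℝ 2 w (c + t • u) ![u, u]
        ≤ -β*(‖v.1‖^2 - 2*δ*‖v.1‖*‖F v.1 + G v.2‖) := by
      have h := hwup (c + t • u) u
      linarith [mul_le_mul_of_nonneg_left hu2 hβ.le]
    have A2 : -β*(‖v.1‖^2 - 2*δ*‖v.1‖*‖F v.1 + G v.2‖)
        ≤ -β*‖v.1‖^2 + 2*δ*β*‖v.1‖*(‖F‖*‖v.1‖ + ‖G‖*‖v.2‖) := by
      have h2δβs : (0:ℝ) ≤ 2*δ*β*‖v.1‖ := by positivity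
      linarith [mul_le_mul_of_nonneg_left hk h2δβs]
    have A3 : δ * T ![v, v] ≤ δ*(C*‖v.1‖^2 + 2*C*‖v.1‖*‖v.2‖ - α*‖v.2‖^2) := by
      apply mul_le_mul_of_nonneg_left _ hδ.le
      linarith [hTsplit]
    have hkey := key_ineq α β C ‖F‖ ‖G‖ ‖v.1‖ ‖v.2‖ δ hα hβ hC (norm_nonneg F) (norm_nonneg G)
      (norm_nonneg _) (norm_nonneg _) hδ hδD
    linarith [A1, A2, A3, hkey]
  -- EReal bookkeeping
  have hφle := hconc.2 hp hq ha hb hab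
  rw [smul_eq_mul, smul_eq_mul] at hφle
  have hφle' : a * (w (p.1 + δ • (F p.1 + G p.2 + g)) + δ * ℓ p)
      + b * (w (q.1 + δ • (F q.1 + G q.2 + g)) + δ * ℓ q)
      ≤ w ((a • p + b • q).1 + δ • (F (a • p + b • q).1 + G (a • p + b • q).2 + g))
        + δ * ℓ (a • p + b • q) := hφle
  rw [ereal_distrib a _ ha, ereal_distrib b _ hb]
  have hrearr : (a : EReal) * z p.1 + ((a * (w (p.1 + δ • (F p.1 + G p.2 + g)) + δ * ℓ p) : ℝ) : EReal)
      + ((b : EReal) * z q.1 + ((b * (w (q.1 + δ • (F q.1 + G q.2 + g)) + δ * ℓ q) : ℝ) : EReal))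
      = ((a : EReal) * z p.1 + (b : EReal) * z q.1)
        + (((a * (w (p.1 + δ • (F p.1 + G p.2 + g)) + δ * ℓ p)
            + b * (w (q.1 + δ • (F q.1 + G q.2 + g)) + δ * ℓ q) : ℝ)) : EReal) := by
    rw [EReal.coe_add]; abel
  rw [hrearr]
  exact add_le_add (hz _ _ a b ha hb hab) (EReal.coe_le_coe_iff.mpr hφle')
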